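/- Let α, β > -1. For all θ, φ ∈ (0,π) one has μ_{α,β}^+(B(θ, |θ-φ|)) ≍ |θ-φ| (θ+φ)^{2α+1} (2π-θ-φ)^{2β+1}, meaning there exist constants 0 < c ≤ C depending only on α and β such that c·|θ-φ|(θ+φ)^{2α+1}(2π-θ-φ)^{2β+1} ≤ μ_{α,β}^+(B(θ,|θ-φ|)) ≤ C·|θ-φ|(θ+φ)^{2α+1}(2π-θ-φ)^{2β+1} for all θ, φ ∈ (0,π). -/

import Mathlib

open MeasureTheory Real Set

noncomputable section

/-- The Jacobi measure `μ_{α,β}^+` on `(0,π)`: density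
`(sin(θ/2))^(2α+1) (cos(θ/2))^(2β+1)` w.r.t. Lebesgue measure on `(0,π)`. -/
def jacobiMeasure (α β : ℝ) : Measure ℝ :=
  (volume.restrict (Ioo 0 π)).withDensity
    (fun θ => ENNReal.ofReal (Real.sin (θ / 2) ^ (2 * α + 1) * Real.cos (θ / 2) ^ (2 * β + 1)))

/-- The ball `B(θ,r) = (θ-r, θ+r) ∩ (0,π)`. -/
def jacobiBall (θ r : ℝ) : Set ℝ := Ioo (θ - r) (θ + r) ∩ Ioo 0 π

/-- The measure `Π_α` on `[-1,1]`. -/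
def PiMeasure (α : ℝ) : Measure ℝ :=
  if α = -(1 / 2) then (2 : ENNReal)⁻¹ • (Measure.dirac (-1) + Measure.dirac 1)
  else
    (volume.restrict (Icc (-1) 1)).withDensity
      (fun u => ENNReal.ofReal
        (Real.Gamma (α + 1) / (Real.sqrt π * Real.Gamma (α + 1 / 2)) * (1 - u ^ 2) ^ (α - 1 / 2)))

/-- `q(θ,φ,u,v) = 1 - u sin(θ/2) sin(φ/2) - v cos(θ/2) cos(φ/2)`. -/
def qfun (θ φ u v : ℝ) : ℝ :=
  1 - u * Real.sin (θ / 2) * Real.sin (φ / 2) - v * Real.cos (θ / 2) * Real.cos (φ / 2)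

/-- `Ψ^{α,β}(t,s) = sinh(t/2) / (cosh(t/2) - 1 + s)^(α+β+2)`. -/
def Psi (α β t s : ℝ) : ℝ :=
  Real.sinh (t / 2) / (Real.cosh (t / 2) - 1 + s) ^ (α + β + 2)

/-- The Jacobi-Poisson kernel `H_t^{α,β}(θ,φ)`. -/
def Hker (α β t θ φ : ℝ) : ℝ :=
  ((2 : ℝ) ^ (-(α + β + 2)) / (jacobiMeasure α β (Ioo 0 π)).toReal) * Real.sinh (t / 2) *
    ∫ u, ∫ v, 1 / (Real.cosh (t / 2) - 1 + qfun θ φ u v) ^ (α + β + 2)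
      ∂(PiMeasure β) ∂(PiMeasure α)

/-- The symmetrized kernel `H̃_t^{α,β}(θ,φ) = (1/4) sin θ sin φ H_t^{α+1,β+1}(θ,φ)`. -/
def Htilde (α β t θ φ : ℝ) : ℝ :=
  (1 / 4) * Real.sin θ * Real.sin φ * Hker (α + 1) (β + 1) t θ φ

end

open intervalIntegral

/-- rpow of a point in a positive interval lies between endpoint powers. -/
lemma rpow_mem_bounds (a : ℝ) {ε M t : ℝ} (hε : 0 < ε) (h1 : ε ≤ t) (h2 : t ≤ M) :
    min (ε ^ a) (M ^ a) ≤ t ^ a ∧ t ^ a ≤ max (ε ^ a) (M ^ a) := by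
  have ht : 0 < t := hε.trans_le h1
  rcases le_or_gt 0 a with ha | ha
  · exact ⟨(min_le_left _ _).trans (Real.rpow_le_rpow hε.le h1 ha),
      (Real.rpow_le_rpow ht.le h2 ha).trans (le_max_right _ _)⟩
  · exact ⟨(min_le_right _ _).trans (Real.rpow_le_rpow_of_nonpos ht h2 ha.le),
      (Real.rpow_le_rpow_of_nonpos hε h1 ha.le).trans (le_max_left _ _)⟩

lemma min_rpow_pos (a : ℝ) {ε M : ℝ} (hε : 0 < ε) (hM : 0 < M) : 0 < min (ε ^ a) (M ^ a) :=
  lt_min (Real.rpow_pos_of_pos hε a) (Real.rpow_pos_of_pos hM a)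

lemma integrableOn_rpow_Ioo (a : ℝ) (ha : -1 < a) (u v : ℝ) :
    IntegrableOn (fun x : ℝ => x ^ a) (Ioo u v) := by
  rcases le_or_gt u v with h | h
  · exact (intervalIntegrable_iff_integrableOn_Ioo_of_le h).1 (intervalIntegrable_rpow' ha)
  · simp [Ioo_eq_empty_of_le h.le]

lemma rpow_setIntegral_bounds {a : ℝ} (ha : -1 < a) {u v : ℝ} (hu : 0 ≤ u) (huv : u ≤ v) :
    min 1 (a + 1)⁻¹ * ((v - u) * v ^ a) ≤ ∫ x in Ioo u v, x ^ a ∧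
    (∫ x in Ioo u v, x ^ a) ≤ max 1 (a + 1)⁻¹ * ((v - u) * v ^ a) := by
  have ha1 : 0 < a + 1 := by linarith
  rcases eq_or_lt_of_le (hu.trans huv) with hv | hv
  · have hu0 : u = 0 := le_antisymm (hv ▸ huv) hu
    rw [← hv, hu0]
    simp
  have hform : (∫ x in Ioo u v, x ^ a) = (v ^ (a + 1) - u ^ (a + 1)) / (a + 1) := by
    rw [← integral_Ioc_eq_integral_Ioo, ← intervalIntegral.integral_of_le huv,
      integral_rpow (Or.inl ha)]
  have hvpow : v ^ (a + 1) = v ^ a * v := Real.rpow_add_one hv.ne' a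
  have hva : (0:ℝ) ≤ v ^ a := Real.rpow_nonneg (hu.trans huv) a
  constructor
  · rcases le_or_gt 0 a with h0 | h0
    · have hle : u ^ (a + 1) ≤ u * v ^ a := by
        rcases eq_or_lt_of_le hu with h | h
        · rw [← h, Real.zero_rpow ha1.ne', zero_mul]
        · rw [Real.rpow_add_one h.ne' a, mul_comm]
          exact mul_le_mul_of_nonneg_left (Real.rpow_le_rpow h.le huv h0) h.le
      rw [hform, div_eq_mul_inv]
      calc min 1 (a+1)⁻¹ * ((v - u) * v ^ a) ≤ (a+1)⁻¹ * ((v-u) * v ^ a) :=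
            mul_le_mul_of_nonneg_right (min_le_right _ _) (mul_nonneg (sub_nonneg.2 huv) hva)
        _ ≤ (v ^ (a+1) - u ^ (a+1)) * (a+1)⁻¹ := by
            rw [mul_comm]
            apply mul_le_mul_of_nonneg_right _ (by positivity)
            nlinarith
    · have key : (v - u) * v ^ a ≤ ∫ x in Ioo u v, x ^ a := by
        have := setIntegral_mono_on (μ := volume) (s := Ioo u v)
          (f := fun _ => v ^ a) (g := fun x => x ^ a)
          (integrableOn_const measure_Ioo_lt_top.ne)
          (integrableOn_rpow_Ioo a ha u v) measurableSet_Ioo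
          (fun x hx => Real.rpow_le_rpow_of_nonpos (hu.trans_lt hx.1) hx.2.le h0.le)
        simpa [Real.volume_Ioo, ENNReal.toReal_ofReal (sub_nonneg.2 huv), max_eq_left (sub_nonneg.2 huv), mul_comm] using this
      refine le_trans ?_ key
      exact mul_le_of_le_one_left (mul_nonneg (sub_nonneg.2 huv) hva) (min_le_left _ _)
  · rcases le_or_gt 0 a with h0 | h0
    · -- pointwise x^a ≤ v^a
      have key : (∫ x in Ioo u v, x ^ a) ≤ (v - u) * v ^ a := by
        have := setIntegral_mono_on (μ := volume) (s := Ioo u v)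
          (f := fun x => x ^ a) (g := fun _ => v ^ a)
          (integrableOn_rpow_Ioo a ha u v)
          (integrableOn_const measure_Ioo_lt_top.ne) measurableSet_Ioo
          (fun x hx => Real.rpow_le_rpow (hu.trans hx.1.le) hx.2.le h0)
        simpa [Real.volume_Ioo, ENNReal.toReal_ofReal (sub_nonneg.2 huv), max_eq_left (sub_nonneg.2 huv), mul_comm] using this
      exact key.trans (le_mul_of_one_le_left (mul_nonneg (sub_nonneg.2 huv) hva) (le_max_left _ _))
    · -- formula: u^{a+1} ≥ u v^a
      have hle : u * v ^ a ≤ u ^ (a + 1) := by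
        rcases eq_or_lt_of_le hu with h | h
        · rw [← h, Real.zero_rpow ha1.ne', zero_mul]
        · rw [Real.rpow_add_one h.ne' a]
          nlinarith [Real.rpow_le_rpow_of_nonpos h huv h0.le]
      rw [hform, div_eq_mul_inv]
      calc (v ^ (a+1) - u ^ (a+1)) * (a+1)⁻¹ ≤ ((v-u) * v ^ a) * (a+1)⁻¹ := by
            apply mul_le_mul_of_nonneg_right _ (by positivity)
            nlinarith
        _ ≤ max 1 (a+1)⁻¹ * ((v - u) * v ^ a) := by
            rw [mul_comm]
            exact mul_le_mul_of_nonneg_right (le_max_right _ _) (mul_nonneg (sub_nonneg.2 huv) hva)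

lemma integrableOn_model (a b : ℝ) (ha : -1 < a) (hb : -1 < b) :
    IntegrableOn (fun x : ℝ => x ^ a * (π - x) ^ b) (Ioo 0 π) := by
  have hmeas : Measurable fun x : ℝ => x ^ a * (π - x) ^ b := by fun_prop
  have hsub : Ioo (0:ℝ) π ⊆ Ioc 0 (π/2) ∪ Ico (π/2) π := by
    intro x hx
    rcases le_or_gt x (π/2) with h | h
    · exact Or.inl ⟨hx.1, h⟩
    · exact Or.inr ⟨h.le, hx.2⟩
  have hpi := pi_pos
  have h1 : IntegrableOn (fun x : ℝ => x ^ a * (π - x) ^ b) (Ioc 0 (π/2)) := by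
    have hint : IntegrableOn (fun x : ℝ => x ^ a) (Ioc 0 (π/2)) :=
      (intervalIntegrable_iff_integrableOn_Ioc_of_le (by linarith)).1 (intervalIntegrable_rpow' ha)
    refine Integrable.mono' (hint.const_mul (max ((π/2) ^ b) (π ^ b))) hmeas.aestronglyMeasurable ?_
    filter_upwards [ae_restrict_mem measurableSet_Ioc] with x hx
    have hx1 : 0 < x := hx.1
    have hb1 : (π - x) ^ b ≤ max ((π/2) ^ b) (π ^ b) :=
      (rpow_mem_bounds b (by linarith) (by linarith [hx.2]) (by linarith [hx.1])).2
    have hxa : (0:ℝ) ≤ x ^ a := Real.rpow_nonneg hx1.le a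
    have h0 : (0:ℝ) ≤ (π - x) ^ b := Real.rpow_nonneg (by linarith [hx.2]) b
    rw [Real.norm_eq_abs, abs_of_nonneg (mul_nonneg hxa h0)]
    calc x ^ a * (π - x) ^ b ≤ x ^ a * max ((π/2) ^ b) (π ^ b) :=
          mul_le_mul_of_nonneg_left hb1 hxa
      _ = max ((π/2) ^ b) (π ^ b) * x ^ a := mul_comm _ _
  have h2 : IntegrableOn (fun x : ℝ => x ^ a * (π - x) ^ b) (Ico (π/2) π) := by
    have hint0 : IntervalIntegrable (fun x : ℝ => x ^ b) volume 0 (π/2) :=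
      intervalIntegrable_rpow' hb
    have hint1 : IntervalIntegrable (fun x : ℝ => (π - x) ^ b) volume (π - 0) (π - π/2) :=
      hint0.comp_sub_left π
    have hint : IntegrableOn (fun x : ℝ => (π - x) ^ b) (Ioc (π/2) π) := by
      have := hint1.symm
      rw [show (π:ℝ) - π/2 = π/2 from by ring, sub_zero] at this
      rwa [intervalIntegrable_iff_integrableOn_Ioc_of_le (by linarith)] at this
    have hint' : IntegrableOn (fun x : ℝ => (π - x) ^ b) (Ico (π/2) π) := by
      rw [integrableOn_Ico_iff_integrableOn_Ioo' (by simp)]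
      exact hint.mono_set Ioo_subset_Ioc_self
    refine Integrable.mono' (hint'.const_mul (max ((π/2) ^ a) (π ^ a))) hmeas.aestronglyMeasurable ?_
    filter_upwards [ae_restrict_mem measurableSet_Ico] with x hx
    have ha1 : x ^ a ≤ max ((π/2) ^ a) (π ^ a) :=
      (rpow_mem_bounds a (by linarith) hx.1 hx.2.le).2
    have hxa : (0:ℝ) ≤ x ^ a := Real.rpow_nonneg (by linarith [hx.1]) a
    have h0 : (0:ℝ) ≤ (π - x) ^ b := Real.rpow_nonneg (by linarith [hx.2]) b
    rw [Real.norm_eq_abs, abs_of_nonneg (mul_nonneg hxa h0)]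
    exact mul_le_mul_of_nonneg_right ha1 h0
  exact (h1.union h2).mono_set hsub

lemma sin_half_bounds {x : ℝ} (h1 : 0 < x) (h2 : x < π) :
    x / π ≤ Real.sin (x / 2) ∧ Real.sin (x / 2) ≤ x / 2 := by
  constructor
  · have := Real.mul_le_sin (x := x / 2) (by linarith) (by linarith)
    calc x / π = 2 / π * (x / 2) := by field_simp
      _ ≤ Real.sin (x / 2) := this
  · exact Real.sin_le (by linarith)

lemma cos_half_bounds {x : ℝ} (h1 : 0 < x) (h2 : x < π) :
    (π - x) / π ≤ Real.cos (x / 2) ∧ Real.cos (x / 2) ≤ (π - x) / 2 := by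
  have key : Real.cos (x / 2) = Real.sin ((π - x) / 2) := by
    rw [show (π - x) / 2 = π / 2 - x / 2 by ring, Real.sin_pi_div_two_sub]
  rw [key]
  exact sin_half_bounds (by linarith) (by linarith)

lemma scaled_rpow_bounds (a : ℝ) {x s : ℝ} (hx : 0 < x) (h1 : x / π ≤ s) (h2 : s ≤ x / 2) :
    min ((π⁻¹:ℝ) ^ a) ((2⁻¹:ℝ) ^ a) * x ^ a ≤ s ^ a ∧
    s ^ a ≤ max ((π⁻¹:ℝ) ^ a) ((2⁻¹:ℝ) ^ a) * x ^ a := by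
  have hpi := pi_pos
  set t := s / x with ht
  have hts : s = x * t := by rw [ht, mul_div_assoc', mul_div_cancel_left₀ _ hx.ne']
  have ht1 : (π⁻¹:ℝ) ≤ t := by
    rw [ht, le_div_iff₀ hx]
    calc π⁻¹ * x = x / π := by ring
      _ ≤ s := h1
  have ht2 : t ≤ 2⁻¹ := by
    rw [ht, div_le_iff₀ hx]
    calc s ≤ x / 2 := h2
      _ = 2⁻¹ * x := by ring
  have htpos : (0:ℝ) < t := lt_of_lt_of_le (by positivity) ht1
  have hb := rpow_mem_bounds a (by positivity) ht1 ht2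
  have hsp : s ^ a = x ^ a * t ^ a := by
    rw [hts, Real.mul_rpow hx.le htpos.le]
  have hxa : (0:ℝ) ≤ x ^ a := Real.rpow_nonneg hx.le a
  constructor
  · rw [hsp, mul_comm (x ^ a)]
    exact mul_le_mul_of_nonneg_right hb.1 hxa
  · rw [hsp, mul_comm (x ^ a)]
    exact mul_le_mul_of_nonneg_right hb.2 hxa

lemma dens_vs_model (a b : ℝ) : ∃ k K : ℝ, 0 < k ∧ 0 < K ∧ ∀ x ∈ Ioo (0:ℝ) π,
    k * (x ^ a * (π - x) ^ b) ≤ Real.sin (x / 2) ^ a * Real.cos (x / 2) ^ b ∧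
    Real.sin (x / 2) ^ a * Real.cos (x / 2) ^ b ≤ K * (x ^ a * (π - x) ^ b) := by
  have hpi := pi_pos
  set ma := min ((π⁻¹:ℝ) ^ a) ((2⁻¹:ℝ) ^ a) with hma
  set Ma := max ((π⁻¹:ℝ) ^ a) ((2⁻¹:ℝ) ^ a) with hMa
  set mb := min ((π⁻¹:ℝ) ^ b) ((2⁻¹:ℝ) ^ b) with hmb
  set Mb := max ((π⁻¹:ℝ) ^ b) ((2⁻¹:ℝ) ^ b) with hMb
  have hmapos : 0 < ma := lt_min (by positivity) (by positivity)
  have hmbpos : 0 < mb := lt_min (by positivity) (by positivity)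
  have hMapos : 0 < Ma := lt_of_lt_of_le hmapos (min_le_max)
  have hMbpos : 0 < Mb := lt_of_lt_of_le hmbpos (min_le_max)
  refine ⟨ma * mb, Ma * Mb, by positivity, by positivity, fun x hx => ?_⟩
  obtain ⟨hx1, hx2⟩ := hx
  have hs := sin_half_bounds hx1 hx2
  have hc := cos_half_bounds hx1 hx2
  have hA := scaled_rpow_bounds a hx1 hs.1 hs.2
  have hB := scaled_rpow_bounds b (x := π - x) (by linarith) hc.1 hc.2
  have hxa : (0:ℝ) ≤ x ^ a := Real.rpow_nonneg hx1.le a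
  have hpb : (0:ℝ) ≤ (π - x) ^ b := Real.rpow_nonneg (by linarith) b
  have hS : (0:ℝ) ≤ Real.sin (x / 2) ^ a :=
    Real.rpow_nonneg (le_trans (div_nonneg hx1.le hpi.le) hs.1) a
  have hC : (0:ℝ) ≤ Real.cos (x / 2) ^ b :=
    Real.rpow_nonneg (le_trans (div_nonneg (by linarith) hpi.le) hc.1) b
  constructor
  · calc ma * mb * (x ^ a * (π - x) ^ b) = (ma * x ^ a) * (mb * (π - x) ^ b) := by ring
      _ ≤ Real.sin (x / 2) ^ a * Real.cos (x / 2) ^ b :=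
          mul_le_mul hA.1 hB.1 (by positivity) hS
  · calc Real.sin (x / 2) ^ a * Real.cos (x / 2) ^ b
        ≤ (Ma * x ^ a) * (Mb * (π - x) ^ b) :=
          mul_le_mul hA.2 hB.2 hC (by positivity)
      _ = Ma * Mb * (x ^ a * (π - x) ^ b) := by ring

lemma model_half (a b : ℝ) (ha : -1 < a) (hb : -1 < b) :
    ∃ c C : ℝ, 0 < c ∧ 0 < C ∧ ∀ θ r : ℝ, 0 < θ → θ ≤ π / 2 → 0 < r → r < π →
      c * (r * (θ + r) ^ a * ((π - θ) + r) ^ b) ≤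
        (∫ x in Ioo (max 0 (θ - r)) (min π (θ + r)), x ^ a * (π - x) ^ b) ∧
      (∫ x in Ioo (max 0 (θ - r)) (min π (θ + r)), x ^ a * (π - x) ^ b) ≤
        C * (r * (θ + r) ^ a * ((π - θ) + r) ^ b) := by
  have hpi := pi_pos
  have ha1 : (0:ℝ) < a + 1 := by linarith
  set ca := min 1 (a + 1)⁻¹ with hca
  set Ca := max 1 (a + 1)⁻¹ with hCa
  have hcapos : 0 < ca := lt_min one_pos (by positivity)
  have hCapos : 0 < Ca := lt_of_lt_of_le one_pos (le_max_left _ _)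
  set m1 := min ((π/4) ^ b) (π ^ b) with hm1
  set M1 := max ((π/4) ^ b) (π ^ b) with hM1
  set m2 := min ((π/2) ^ b) ((2*π) ^ b) with hm2
  set M2 := max ((π/2) ^ b) ((2*π) ^ b) with hM2
  set m3 := min ((π/8) ^ a) ((3*π/4) ^ a) with hm3
  set m5 := min ((π/4) ^ a) ((3*π/2) ^ a) with hm5
  set M5 := max ((π/4) ^ a) ((3*π/2) ^ a) with hM5
  have hm1pos : 0 < m1 := lt_min (by positivity) (by positivity)
  have hM1pos : 0 < M1 := lt_of_lt_of_le hm1pos min_le_max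
  have hm2pos : 0 < m2 := lt_min (by positivity) (by positivity)
  have hM2pos : 0 < M2 := lt_of_lt_of_le hm2pos min_le_max
  have hm3pos : 0 < m3 := lt_min (by positivity) (by positivity)
  have hm5pos : 0 < m5 := lt_min (by positivity) (by positivity)
  have hM5pos : 0 < M5 := lt_of_lt_of_le hm5pos min_le_max
  set Z := ∫ x in Ioo (0:ℝ) π, x ^ a * (π - x) ^ b with hZ
  have hZnn : 0 ≤ Z := by
    apply setIntegral_nonneg measurableSet_Ioo
    intro x hx
    exact mul_nonneg (Real.rpow_nonneg hx.1.le a) (Real.rpow_nonneg (by linarith [hx.2]) b)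
  set τ := (π/4) * m5 * m2 with hτ
  have hτpos : 0 < τ := by positivity
  set ι := m3 * m1 * (π/8) with hι
  have hιpos : 0 < ι := by positivity
  set κ := π * M5 * M2 with hκ
  have hκpos : 0 < κ := by positivity
  refine ⟨min (m1 * ca / M2) (ι / κ), max (2 * M1 * Ca / m2) ((Z + 1) / τ),
    lt_min (by positivity) (by positivity), lt_of_lt_of_le (by positivity) (le_max_left _ _),
    fun θ r hθ hθ2 hr hrπ => ?_⟩
  set u := max 0 (θ - r) with hu
  set v := min π (θ + r) with hv
  have hu0 : 0 ≤ u := le_max_left _ _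
  have huθ : u ≤ θ := max_le hθ.le (by linarith)
  have hθv : θ ≤ v := le_min (by linarith) (by linarith)
  have huv : u ≤ v := huθ.trans hθv
  have hvπ : v ≤ π := min_le_left _ _
  have hIoosub : Ioo u v ⊆ Ioo 0 π := Ioo_subset_Ioo hu0 hvπ
  have hintM : IntegrableOn (fun x : ℝ => x ^ a * (π - x) ^ b) (Ioo u v) :=
    (integrableOn_model a b ha hb).mono_set hIoosub
  have hP : (0:ℝ) ≤ r * (θ + r) ^ a := mul_nonneg hr.le (Real.rpow_nonneg (by linarith) a)
  rcases le_or_gt r (π/4) with hcase | hcase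
  · -- small radius case
    have hvv : v = θ + r := min_eq_right (by linarith)
    have hlen : r ≤ v - u ∧ v - u ≤ 2 * r := by
      rcases le_or_gt 0 (θ - r) with h | h
      · have h1 : u = θ - r := by rw [hu]; exact max_eq_right h
        rw [h1, hvv]; constructor <;> linarith
      · have h1 : u = 0 := by rw [hu]; exact max_eq_left h.le
        rw [h1, hvv]; constructor <;> linarith
    have hlen1 : r ≤ v - u := hlen.1
    have hlen2 : v - u ≤ 2 * r := hlen.2
    -- bounds for (π - x)^b on Ioo u v
    have hwb : ∀ x ∈ Ioo u v, m1 ≤ (π - x) ^ b ∧ (π - x) ^ b ≤ M1 := by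
      intro x hx
      have hx1 : 0 < x := lt_of_le_of_lt hu0 hx.1
      have hx2 : x < θ + r := hvv ▸ hx.2
      exact rpow_mem_bounds b (by linarith) (by linarith) (by linarith)
    -- compare with pure power integral
    have hIa := rpow_setIntegral_bounds ha hu0 huv
    have hxa_int : IntegrableOn (fun x : ℝ => x ^ a) (Ioo u v) := integrableOn_rpow_Ioo a ha u v
    have hlow : m1 * ∫ x in Ioo u v, x ^ a ≤ ∫ x in Ioo u v, x ^ a * (π - x) ^ b := by
      rw [← MeasureTheory.integral_const_mul]
      apply setIntegral_mono_on (hxa_int.const_mul m1) hintM measurableSet_Ioo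
      intro x hx
      have := (hwb x hx).1
      have hxa : (0:ℝ) ≤ x ^ a := Real.rpow_nonneg (lt_of_le_of_lt hu0 hx.1).le a
      calc m1 * x ^ a ≤ (π - x) ^ b * x ^ a := mul_le_mul_of_nonneg_right this hxa
        _ = x ^ a * (π - x) ^ b := mul_comm _ _
    have hhigh : (∫ x in Ioo u v, x ^ a * (π - x) ^ b) ≤ M1 * ∫ x in Ioo u v, x ^ a := by
      rw [← MeasureTheory.integral_const_mul]
      apply setIntegral_mono_on hintM (hxa_int.const_mul M1) measurableSet_Ioo
      intro x hx
      have := (hwb x hx).2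
      have hxa : (0:ℝ) ≤ x ^ a := Real.rpow_nonneg (lt_of_le_of_lt hu0 hx.1).le a
      calc x ^ a * (π - x) ^ b = (π - x) ^ b * x ^ a := mul_comm _ _
        _ ≤ M1 * x ^ a := mul_le_mul_of_nonneg_right this hxa
    have hva : (0:ℝ) ≤ v ^ a := Real.rpow_nonneg (by linarith [hθv, hθ]) a
    have hPv : (0:ℝ) ≤ r * v ^ a := mul_nonneg hr.le hva
    have hwtb : (0:ℝ) ≤ ((π - θ) + r) ^ b := Real.rpow_nonneg (by linarith) b
    -- (π - θ + r)^b bounds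
    have hwt := rpow_mem_bounds b (ε := π/2) (M := 2*π) (t := (π - θ) + r)
      (by linarith) (by linarith) (by linarith)
    constructor
    · rw [← hvv]
      have k1 : ca * (r * v ^ a) ≤ ∫ x in Ioo u v, x ^ a :=
        le_trans (mul_le_mul_of_nonneg_left
          (mul_le_mul_of_nonneg_right hlen1 hva) hcapos.le) hIa.1
      calc min (m1 * ca / M2) (ι / κ) * (r * v ^ a * ((π - θ) + r) ^ b)
          ≤ (m1 * ca / M2) * (r * v ^ a * ((π - θ) + r) ^ b) :=
            mul_le_mul_of_nonneg_right (min_le_left _ _) (mul_nonneg hPv hwtb)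
        _ ≤ (m1 * ca / M2) * ((r * v ^ a) * M2) := by
            apply mul_le_mul_of_nonneg_left _ (by positivity)
            exact mul_le_mul_of_nonneg_left hwt.2 hPv
        _ = m1 * (ca * (r * v ^ a)) := by field_simp
        _ ≤ m1 * ∫ x in Ioo u v, x ^ a := mul_le_mul_of_nonneg_left k1 hm1pos.le
        _ ≤ ∫ x in Ioo u v, x ^ a * (π - x) ^ b := hlow
    · rw [← hvv]
      have k1 : (∫ x in Ioo u v, x ^ a) ≤ Ca * (2 * r * v ^ a) :=
        le_trans hIa.2 (mul_le_mul_of_nonneg_left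
          (mul_le_mul_of_nonneg_right hlen2 hva) hCapos.le)
      calc (∫ x in Ioo u v, x ^ a * (π - x) ^ b)
          ≤ M1 * ∫ x in Ioo u v, x ^ a := hhigh
        _ ≤ M1 * (Ca * (2 * r * v ^ a)) := mul_le_mul_of_nonneg_left k1 hM1pos.le
        _ = (2 * M1 * Ca / m2) * (r * v ^ a * m2) := by field_simp
        _ ≤ (2 * M1 * Ca / m2) * (r * v ^ a * ((π - θ) + r) ^ b) := by
            apply mul_le_mul_of_nonneg_left _ (by positivity)
            exact mul_le_mul_of_nonneg_left hwt.1 hPv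
        _ ≤ max (2 * M1 * Ca / m2) ((Z + 1) / τ) * (r * v ^ a * ((π - θ) + r) ^ b) :=
            mul_le_mul_of_nonneg_right (le_max_left _ _) (mul_nonneg hPv hwtb)
  · -- large radius case
    have hθr1 : π/4 < θ + r := by linarith
    have hθr2 : θ + r < 3*π/2 := by linarith
    have hπθ1 : π/2 < (π - θ) + r := by linarith
    have hπθ2 : (π - θ) + r < 2*π := by linarith
    have hwa := rpow_mem_bounds a (ε := π/4) (M := 3*π/2) (t := θ + r)
      (by linarith) hθr1.le hθr2.le
    have hwb := rpow_mem_bounds b (ε := π/2) (M := 2*π) (t := (π - θ) + r)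
      (by linarith) hπθ1.le hπθ2.le
    have hTup : r * (θ + r) ^ a * ((π - θ) + r) ^ b ≤ κ := by
      have h1 : r * (θ + r) ^ a ≤ π * M5 :=
        mul_le_mul hrπ.le hwa.2 (Real.rpow_nonneg (by linarith) a) hpi.le
      calc r * (θ + r) ^ a * ((π - θ) + r) ^ b ≤ (π * M5) * ((π - θ) + r) ^ b :=
            mul_le_mul_of_nonneg_right h1 (Real.rpow_nonneg (by linarith) b)
        _ ≤ (π * M5) * M2 := mul_le_mul_of_nonneg_left hwb.2 (by positivity)
        _ = κ := by rw [hκ]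
    have hTlo : τ ≤ r * (θ + r) ^ a * ((π - θ) + r) ^ b := by
      have h1 : (π/4) * m5 ≤ r * (θ + r) ^ a :=
        mul_le_mul hcase.le hwa.1 hm5pos.le hr.le
      calc τ = ((π/4) * m5) * m2 := by rw [hτ]
        _ ≤ (r * (θ + r) ^ a) * ((π - θ) + r) ^ b := by
            apply mul_le_mul h1 hwb.1 hm2pos.le hP
    have hI_nonneg_integrand : ∀ x ∈ Ioo u v, 0 ≤ x ^ a * (π - x) ^ b := fun x hx =>
      mul_nonneg (Real.rpow_nonneg (lt_of_le_of_lt hu0 hx.1).le a)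
        (Real.rpow_nonneg (by linarith [(hIoosub hx).2]) b)
    constructor
    · -- lower bound via fixed subinterval
      set p := θ + π/8 with hp
      set q := θ + π/4 with hq
      have hpq : Ioo p q ⊆ Ioo u v := by
        apply Ioo_subset_Ioo
        · rw [hp]; exact le_trans huθ (by linarith)
        · rw [hq, hv]
          exact le_min (by linarith) (by linarith)
      have hsub : m3 * m1 * (q - p) ≤ ∫ x in Ioo p q, x ^ a * (π - x) ^ b := by
        have hconst : (∫ _x in Ioo p q, m3 * m1) ≤ ∫ x in Ioo p q, x ^ a * (π - x) ^ b := by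
          apply setIntegral_mono_on (integrableOn_const measure_Ioo_lt_top.ne)
            (hintM.mono_set hpq) measurableSet_Ioo
          intro x hx
          have hx1 : π/8 < x := by rw [hp] at hx; linarith [hx.1]
          have hx2 : x < 3*π/4 := by rw [hq] at hx; linarith [hx.2]
          have h1 := (rpow_mem_bounds a (ε := π/8) (M := 3*π/4) (by linarith) hx1.le hx2.le).1
          have h2 := (rpow_mem_bounds b (ε := π/4) (M := π) (t := π - x) (by linarith)
            (by linarith) (by linarith)).1
          have := mul_le_mul h1 h2 hm1pos.le (Real.rpow_nonneg (by linarith) a)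
          exact this
        rw [setIntegral_const] at hconst
        rw [measureReal_def, Real.volume_Ioo] at hconst
        rw [ENNReal.toReal_ofReal (by rw [hp, hq]; linarith)] at hconst
        simpa [smul_eq_mul, mul_comm] using hconst
      have hmono : (∫ x in Ioo p q, x ^ a * (π - x) ^ b) ≤
          ∫ x in Ioo u v, x ^ a * (π - x) ^ b := by
        apply setIntegral_mono_set hintM
        · filter_upwards [ae_restrict_mem measurableSet_Ioo] with x hx
          exact hI_nonneg_integrand x hx
        · exact HasSubset.Subset.eventuallyLE hpq
      have hqp : q - p = π/8 := by rw [hp, hq]; ring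
      refine le_trans ?_ (le_trans hsub hmono)
      rw [hqp]
      calc min (m1 * ca / M2) (ι / κ) * (r * (θ + r) ^ a * ((π - θ) + r) ^ b)
          ≤ (ι / κ) * (r * (θ + r) ^ a * ((π - θ) + r) ^ b) :=
            mul_le_mul_of_nonneg_right (min_le_right _ _) (le_trans hτpos.le hTlo)
        _ ≤ (ι / κ) * κ := mul_le_mul_of_nonneg_left hTup (by positivity)
        _ = m3 * m1 * (π/8) := by
            rw [hι, div_mul_cancel₀ _ hκpos.ne']
    · -- upper bound via total integral
      have hmono : (∫ x in Ioo u v, x ^ a * (π - x) ^ b) ≤ Z := by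
        rw [hZ]
        apply setIntegral_mono_set (integrableOn_model a b ha hb)
        · filter_upwards [ae_restrict_mem measurableSet_Ioo] with x hx
          exact mul_nonneg (Real.rpow_nonneg hx.1.le a) (Real.rpow_nonneg (by linarith [hx.2]) b)
        · exact HasSubset.Subset.eventuallyLE hIoosub
      refine le_trans hmono ?_
      calc Z ≤ Z + 1 := by linarith
        _ = ((Z + 1) / τ) * τ := by field_simp
        _ ≤ ((Z + 1) / τ) * (r * (θ + r) ^ a * ((π - θ) + r) ^ b) :=
            mul_le_mul_of_nonneg_left hTlo (by positivity)
        _ ≤ max (2 * M1 * Ca / m2) ((Z + 1) / τ) * (r * (θ + r) ^ a * ((π - θ) + r) ^ b) :=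
            mul_le_mul_of_nonneg_right (le_max_right _ _) (le_trans hτpos.le hTlo)

lemma model_reflect (a b : ℝ) {u v : ℝ} (huv : u ≤ v) (hvπ : v ≤ π) (hu0 : 0 ≤ u) :
    (∫ x in Ioo u v, x ^ a * (π - x) ^ b) =
      ∫ x in Ioo (π - v) (π - u), x ^ b * (π - x) ^ a := by
  rw [← integral_Ioc_eq_integral_Ioo, ← intervalIntegral.integral_of_le huv,
    ← integral_Ioc_eq_integral_Ioo, ← intervalIntegral.integral_of_le (by linarith)]
  rw [← intervalIntegral.integral_comp_sub_left (fun x => x ^ b * (π - x) ^ a) π]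
  refine intervalIntegral.integral_congr fun x _ => ?_
  simp only [sub_sub_cancel]
  ring

lemma model_bound (a b : ℝ) (ha : -1 < a) (hb : -1 < b) :
    ∃ c C : ℝ, 0 < c ∧ 0 < C ∧ ∀ θ r : ℝ, 0 < θ → θ < π → 0 < r → r < π →
      c * (r * (θ + r) ^ a * ((π - θ) + r) ^ b) ≤
        (∫ x in Ioo (max 0 (θ - r)) (min π (θ + r)), x ^ a * (π - x) ^ b) ∧
      (∫ x in Ioo (max 0 (θ - r)) (min π (θ + r)), x ^ a * (π - x) ^ b) ≤
        C * (r * (θ + r) ^ a * ((π - θ) + r) ^ b) := by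
  obtain ⟨c1, C1, hc1, hC1, h1⟩ := model_half a b ha hb
  obtain ⟨c2, C2, hc2, hC2, h2⟩ := model_half b a hb ha
  refine ⟨min c1 c2, max C1 C2, lt_min hc1 hc2, lt_of_lt_of_le hC1 (le_max_left _ _),
    fun θ r hθ hθπ hr hrπ => ?_⟩
  have hpi := pi_pos
  have hT : (0:ℝ) ≤ r * (θ + r) ^ a * ((π - θ) + r) ^ b :=
    mul_nonneg (mul_nonneg hr.le (Real.rpow_nonneg (by linarith) a))
      (Real.rpow_nonneg (by linarith) b)
  rcases le_or_gt θ (π / 2) with hhalf | hhalf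
  · obtain ⟨l1, l2⟩ := h1 θ r hθ hhalf hr hrπ
    constructor
    · exact le_trans (mul_le_mul_of_nonneg_right (min_le_left _ _) hT) l1
    · exact le_trans l2 (mul_le_mul_of_nonneg_right (le_max_left _ _) hT)
  · -- reflect
    set θ' := π - θ with hθ'
    have hθ'1 : 0 < θ' := by rw [hθ']; linarith
    have hθ'2 : θ' ≤ π / 2 := by rw [hθ']; linarith
    obtain ⟨l1, l2⟩ := h2 θ' r hθ'1 hθ'2 hr hrπ
    -- identify integration sets
    have hu0 : (0:ℝ) ≤ max 0 (θ - r) := le_max_left _ _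
    have huv : max 0 (θ - r) ≤ min π (θ + r) := by
      apply max_le <;> [skip; skip] <;> apply le_min <;> linarith
    have hvπ : min π (θ + r) ≤ π := min_le_left _ _
    have e1 : π - min π (θ + r) = max 0 (θ' - r) := by
      rcases le_total (θ + r) π with h | h
      · rw [min_eq_right h, max_eq_right (by rw [hθ']; linarith)]; rw [hθ']; ring
      · rw [min_eq_left h, max_eq_left (by rw [hθ']; linarith)]; ring
    have e2 : π - max 0 (θ - r) = min π (θ' + r) := by
      rcases le_total 0 (θ - r) with h | h
      · rw [max_eq_right h, min_eq_right (by rw [hθ']; linarith)]; rw [hθ']; ring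
      · rw [max_eq_left h, min_eq_left (by rw [hθ']; linarith)]; ring
    have key : (∫ x in Ioo (max 0 (θ - r)) (min π (θ + r)), x ^ a * (π - x) ^ b) =
        ∫ x in Ioo (max 0 (θ' - r)) (min π (θ' + r)), x ^ b * (π - x) ^ a := by
      rw [model_reflect a b huv hvπ hu0, e1, e2]
    have eT : r * (θ' + r) ^ b * ((π - θ') + r) ^ a =
        r * (θ + r) ^ a * ((π - θ) + r) ^ b := by
      rw [hθ', sub_sub_cancel]; ring
    rw [key]
    rw [eT] at l1 l2
    constructor
    · exact le_trans (mul_le_mul_of_nonneg_right (min_le_right _ _) hT) l1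
    · exact le_trans l2 (mul_le_mul_of_nonneg_right (le_max_right _ _) hT)

lemma dens_nonneg_on {a b x : ℝ} (hx : x ∈ Ioo (0:ℝ) π) :
    0 ≤ Real.sin (x / 2) ^ a * Real.cos (x / 2) ^ b := by
  have h1 : 0 ≤ Real.sin (x / 2) := Real.sin_nonneg_of_nonneg_of_le_pi
    (by linarith [hx.1]) (by linarith [hx.2, pi_pos])
  have h2 : 0 ≤ Real.cos (x / 2) := Real.cos_nonneg_of_mem_Icc
    ⟨by linarith [hx.1, pi_pos], by linarith [hx.2]⟩
  exact mul_nonneg (Real.rpow_nonneg h1 a) (Real.rpow_nonneg h2 b)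

lemma integrableOn_dens (a b : ℝ) (ha : -1 < a) (hb : -1 < b) :
    IntegrableOn (fun x : ℝ => Real.sin (x / 2) ^ a * Real.cos (x / 2) ^ b) (Ioo 0 π) := by
  obtain ⟨k, K, hk, hK, h⟩ := dens_vs_model a b
  refine Integrable.mono' ((integrableOn_model a b ha hb).const_mul K)
    ((by fun_prop : Measurable fun x : ℝ =>
      Real.sin (x / 2) ^ a * Real.cos (x / 2) ^ b).aestronglyMeasurable) ?_
  filter_upwards [ae_restrict_mem measurableSet_Ioo] with x hx
  rw [Real.norm_eq_abs, abs_of_nonneg (dens_nonneg_on hx)]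
  exact (h x hx).2

lemma jacobi_ball_eq (θ r : ℝ) :
    jacobiBall θ r = Ioo (max 0 (θ - r)) (min π (θ + r)) := by
  rw [jacobiBall, Ioo_inter_Ioo, max_comm, min_comm]

lemma jacobi_measure_ball (α β : ℝ) (hα : -1 < α) (hβ : -1 < β) (θ r : ℝ) :
    jacobiMeasure α β (jacobiBall θ r) =
      ENNReal.ofReal (∫ x in Ioo (max 0 (θ - r)) (min π (θ + r)),
        Real.sin (x / 2) ^ (2 * α + 1) * Real.cos (x / 2) ^ (2 * β + 1)) := by
  set u := max 0 (θ - r) with hu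
  set v := min π (θ + r) with hv
  have hsub : Ioo u v ⊆ Ioo 0 π := Ioo_subset_Ioo (le_max_left _ _) (min_le_left _ _)
  rw [jacobiMeasure, jacobi_ball_eq, withDensity_apply _ measurableSet_Ioo,
    Measure.restrict_restrict measurableSet_Ioo, inter_eq_left.2 hsub]
  rw [← ofReal_integral_eq_lintegral_ofReal
    (((integrableOn_dens (2*α+1) (2*β+1) (by linarith) (by linarith))).mono_set hsub)]
  filter_upwards [ae_restrict_mem measurableSet_Ioo] with x hx
  exact dens_nonneg_on (hsub hx)

lemma add_abs_sub_bounds {x y : ℝ} (hx : 0 < x) (hy : 0 < y) :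
    (x + y) / 2 ≤ x + |x - y| ∧ x + |x - y| ≤ 2 * (x + y) := by
  rcases abs_cases (x - y) with ⟨h1, h2⟩ | ⟨h1, h2⟩ <;> constructor <;> linarith

lemma ratio_rpow_bounds (a : ℝ) {s S : ℝ} (hS : 0 < S) (h1 : S / 2 ≤ s) (h2 : s ≤ 2 * S) :
    min ((2⁻¹:ℝ) ^ a) ((2:ℝ) ^ a) * S ^ a ≤ s ^ a ∧
    s ^ a ≤ max ((2⁻¹:ℝ) ^ a) ((2:ℝ) ^ a) * S ^ a := by
  have hs : 0 < s := lt_of_lt_of_le (by linarith) h1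
  set t := s / S with ht
  have hts : s = S * t := by rw [ht, mul_div_assoc', mul_div_cancel_left₀ _ hS.ne']
  have ht1 : (2⁻¹:ℝ) ≤ t := by rw [ht, le_div_iff₀ hS]; linarith
  have ht2 : t ≤ 2 := by rw [ht, div_le_iff₀ hS]; linarith
  have htpos : (0:ℝ) < t := lt_of_lt_of_le (by norm_num) ht1
  have hb := rpow_mem_bounds a (by norm_num : (0:ℝ) < 2⁻¹) ht1 ht2
  have hsp : s ^ a = S ^ a * t ^ a := by rw [hts, Real.mul_rpow hS.le htpos.le]
  have hSa : (0:ℝ) ≤ S ^ a := Real.rpow_nonneg hS.le a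
  rw [hsp]
  constructor
  · rw [mul_comm (S ^ a)]; exact mul_le_mul_of_nonneg_right hb.1 hSa
  · rw [mul_comm (S ^ a)]; exact mul_le_mul_of_nonneg_right hb.2 hSa

/-- two-sided estimate for the Jacobi measure of the ball
`B(θ,|θ-φ|)`. -/
theorem jacobi_ball_measure_comparison (α β : ℝ) (hα : -1 < α) (hβ : -1 < β) :
    ∃ c C : ℝ, 0 < c ∧ c ≤ C ∧
      ∀ θ ∈ Ioo (0 : ℝ) π, ∀ φ ∈ Ioo (0 : ℝ) π,
        ENNReal.ofReal
            (c * (|θ - φ| * (θ + φ) ^ (2 * α + 1) * (2 * π - θ - φ) ^ (2 * β + 1)))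
          ≤ jacobiMeasure α β (jacobiBall θ |θ - φ|) ∧
        jacobiMeasure α β (jacobiBall θ |θ - φ|)
          ≤ ENNReal.ofReal
            (C * (|θ - φ| * (θ + φ) ^ (2 * α + 1) * (2 * π - θ - φ) ^ (2 * β + 1))) := by
  have hpi := pi_pos
  set a := 2 * α + 1 with haa
  set b := 2 * β + 1 with hbb
  have ha : -1 < a := by rw [haa]; linarith
  have hb : -1 < b := by rw [hbb]; linarith
  obtain ⟨k, K, hk, hK, hdens⟩ := dens_vs_model a b
  obtain ⟨c0, C0, hc0, hC0, hmodel⟩ := model_bound a b ha hb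
  set e := min ((2⁻¹:ℝ) ^ a) ((2:ℝ) ^ a) with he
  set E := max ((2⁻¹:ℝ) ^ a) ((2:ℝ) ^ a) with hE
  set f := min ((2⁻¹:ℝ) ^ b) ((2:ℝ) ^ b) with hf
  set F := max ((2⁻¹:ℝ) ^ b) ((2:ℝ) ^ b) with hF
  have hepos : 0 < e := lt_min (by positivity) (by positivity)
  have hfpos : 0 < f := lt_min (by positivity) (by positivity)
  have hEpos : 0 < E := lt_of_lt_of_le hepos min_le_max
  have hFpos : 0 < F := lt_of_lt_of_le hfpos min_le_max
  set c := k * c0 * (e * f) with hc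
  set C := K * C0 * (E * F) with hC
  have hcpos : 0 < c := by positivity
  have hCpos : 0 < C := by positivity
  refine ⟨min c C, max c C, lt_min hcpos hCpos, min_le_max, fun θ hθ φ hφ => ?_⟩
  obtain ⟨hθ1, hθ2⟩ := hθ
  obtain ⟨hφ1, hφ2⟩ := hφ
  rcases eq_or_ne θ φ with rfl | hne
  · have hball : jacobiBall θ |θ - θ| = ∅ := by
      simp [jacobiBall, sub_self]
    rw [hball, measure_empty]
    simp
  -- now r > 0
  set r := |θ - φ| with hr
  have hrpos : 0 < r := by rw [hr]; exact abs_pos.2 (sub_ne_zero.2 hne)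
  have hrπ : r < π := by
    rw [hr]; rcases abs_cases (θ - φ) with ⟨h1, _⟩ | ⟨h1, _⟩ <;> rw [h1] <;> linarith
  -- comparison of θ + r with θ + φ
  have habs1 := add_abs_sub_bounds hθ1 hφ1
  have habs2 := add_abs_sub_bounds (x := π - θ) (y := π - φ) (by linarith) (by linarith)
  have habs2' : (π - θ) + |θ - φ| = (π - θ) + |(π - θ) - (π - φ)| := by
    rw [show (π - θ) - (π - φ) = φ - θ by ring, abs_sub_comm]
  have hratio1 := ratio_rpow_bounds a (S := θ + φ) (s := θ + r) (by linarith)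
    (by rw [hr]; linarith [habs1.1]) (by rw [hr]; linarith [habs1.2])
  have hratio2 := ratio_rpow_bounds b (S := 2 * π - θ - φ) (s := (π - θ) + r)
    (by linarith) (by rw [hr, habs2']; linarith [habs2.1])
    (by rw [hr, habs2']; linarith [habs2.2])
  -- the measure as a real integral
  rw [jacobi_measure_ball α β hα hβ θ r]
  set u := max 0 (θ - r) with hu
  set v := min π (θ + r) with hv
  have hsub : Ioo u v ⊆ Ioo 0 π := Ioo_subset_Ioo (le_max_left _ _) (min_le_left _ _)
  have hintD : IntegrableOn (fun x : ℝ => Real.sin (x / 2) ^ a * Real.cos (x / 2) ^ b)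
      (Ioo u v) := (integrableOn_dens a b ha hb).mono_set hsub
  have hintM : IntegrableOn (fun x : ℝ => x ^ a * (π - x) ^ b) (Ioo u v) :=
    (integrableOn_model a b ha hb).mono_set hsub
  set D := ∫ x in Ioo u v, Real.sin (x / 2) ^ a * Real.cos (x / 2) ^ b with hD
  set I := ∫ x in Ioo u v, x ^ a * (π - x) ^ b with hI
  have hlowD : k * I ≤ D := by
    rw [hD, hI, ← MeasureTheory.integral_const_mul]
    exact setIntegral_mono_on (hintM.const_mul k) hintD measurableSet_Ioo
      (fun x hx => (hdens x (hsub hx)).1)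
  have hhighD : D ≤ K * I := by
    rw [hD, hI, ← MeasureTheory.integral_const_mul]
    exact setIntegral_mono_on hintD (hintM.const_mul K) measurableSet_Ioo
      (fun x hx => (hdens x (hsub hx)).2)
  obtain ⟨hm1, hm2⟩ := hmodel θ r hθ1 hθ2 hrpos hrπ
  set T := r * (θ + r) ^ a * ((π - θ) + r) ^ b with hT
  set G := r * (θ + φ) ^ a * (2 * π - θ - φ) ^ b with hG
  have hGnn : 0 ≤ G := by
    rw [hG]
    exact mul_nonneg (mul_nonneg hrpos.le (Real.rpow_nonneg (by linarith) a))
      (Real.rpow_nonneg (by linarith) b)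
  have hTlow : e * f * G ≤ T := by
    rw [hT, hG]
    have h1 : r * (e * (θ + φ) ^ a) ≤ r * (θ + r) ^ a :=
      mul_le_mul_of_nonneg_left hratio1.1 hrpos.le
    have h2 : (r * (e * (θ + φ) ^ a)) * (f * (2 * π - θ - φ) ^ b) ≤
        (r * (θ + r) ^ a) * ((π - θ) + r) ^ b :=
      mul_le_mul h1 hratio2.1
        (mul_nonneg hfpos.le (Real.rpow_nonneg (by linarith) b))
        (mul_nonneg hrpos.le (Real.rpow_nonneg (by linarith) a))
    calc e * f * (r * (θ + φ) ^ a * (2 * π - θ - φ) ^ b)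
        = (r * (e * (θ + φ) ^ a)) * (f * (2 * π - θ - φ) ^ b) := by ring
      _ ≤ (r * (θ + r) ^ a) * ((π - θ) + r) ^ b := h2
  have hThigh : T ≤ E * F * G := by
    rw [hT, hG]
    have h1 : r * (θ + r) ^ a ≤ r * (E * (θ + φ) ^ a) :=
      mul_le_mul_of_nonneg_left hratio1.2 hrpos.le
    have h2 : (r * (θ + r) ^ a) * ((π - θ) + r) ^ b ≤
        (r * (E * (θ + φ) ^ a)) * (F * (2 * π - θ - φ) ^ b) :=
      mul_le_mul h1 hratio2.2 (Real.rpow_nonneg (by linarith) b)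
        (mul_nonneg hrpos.le (mul_nonneg hEpos.le (Real.rpow_nonneg (by linarith) a)))
    calc r * (θ + r) ^ a * ((π - θ) + r) ^ b
        ≤ (r * (E * (θ + φ) ^ a)) * (F * (2 * π - θ - φ) ^ b) := h2
      _ = E * F * (r * (θ + φ) ^ a * (2 * π - θ - φ) ^ b) := by ring
  constructor
  · apply ENNReal.ofReal_le_ofReal
    calc min c C * (r * (θ + φ) ^ a * (2 * π - θ - φ) ^ b)
        ≤ c * G := mul_le_mul_of_nonneg_right (min_le_left _ _) hGnn
      _ = k * (c0 * (e * f * G)) := by rw [hc]; ring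
      _ ≤ k * (c0 * T) := by
          apply mul_le_mul_of_nonneg_left _ hk.le
          exact mul_le_mul_of_nonneg_left hTlow hc0.le
      _ = k * (c0 * T) := rfl
      _ ≤ k * I := by
          apply mul_le_mul_of_nonneg_left _ hk.le
          exact hm1
      _ ≤ D := hlowD
  · apply ENNReal.ofReal_le_ofReal
    calc D ≤ K * I := hhighD
      _ ≤ K * (C0 * T) := mul_le_mul_of_nonneg_left hm2 hK.le
      _ ≤ K * (C0 * (E * F * G)) := by
          apply mul_le_mul_of_nonneg_left _ hK.le
          exact mul_le_mul_of_nonneg_left hThigh hC0.le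
      _ = C * G := by rw [hC]; ring
      _ ≤ max c C * (r * (θ + φ) ^ a * (2 * π - θ - φ) ^ b) :=
          mul_le_mul_of_nonneg_right (le_max_right _ _) hGnn
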